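/- There exist a constant a > 0 and a non-decreasing function d : ℕ × ℕ → ℕ with d(ℓ,n) ≤ a·ℓ·log₂(n+1) for all ℓ, n ≥ 1, such that every finite simple graph G on n vertices has, for every integer ℓ ≥ 1, a balanced separator of order at most n/ℓ + d(ℓ,n)·ω_{d(ℓ,n)}(G)². -/

import Mathlib

open scoped Classical
set_option linter.unusedSectionVars false
set_option linter.unusedVariables false
set_option maxHeartbeats 1000000

universe u

/-- `C` is a balanced separator in `G`: every connected component of `G - C`
has at most `(2/3)|V(G)|` vertices. -/
def IsBalancedSeparator {V : Type u} (G : SimpleGraph V) (C : Set V) : Prop :=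
  ∀ K : (G.induce Cᶜ).ConnectedComponent, 3 * K.supp.ncard ≤ 2 * Nat.card V

/-- A model of the clique `K_m` of depth `d` in `G`. -/
structure CliqueModel {V : Type u} (G : SimpleGraph V) (m d : ℕ) where
  B : Fin m → Set V
  disj : ∀ i j : Fin m, i ≠ j → Disjoint (B i) (B j)
  conn : ∀ i, (G.induce (B i)).Connected
  rad : ∀ i, ∃ v : B i, ∀ u : B i, (G.induce (B i)).dist v u ≤ d
  adj : ∀ i j : Fin m, i < j → ∃ u ∈ B i, ∃ v ∈ B j, G.Adj u v

/-- The support of a clique model. -/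
def CliqueModel.support {V : Type u} {G : SimpleGraph V} {m d : ℕ}
    (M : CliqueModel G m d) : Set V := ⋃ i, M.B i

/-- An `m₀`-bounded model: each branch set has at most `m₀ * d` vertices. -/
def CliqueModel.Bounded {V : Type u} {G : SimpleGraph V} {m d : ℕ}
    (M : CliqueModel G m d) (m₀ : ℕ) : Prop := ∀ i, (M.B i).ncard ≤ m₀ * d

/-- `ω_d(G)`: the maximum `m` such that `G` contains a model of `K_m` of depth `d`. -/
noncomputable def omegaDepth {V : Type u} (G : SimpleGraph V) (d : ℕ) : ℕ :=
  sSup {m | Nonempty (CliqueModel G m d)}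

/-- Membership in the class `𝒢_{c,ε}`: every subgraph `H` of `G` has a
balanced separator of order at most `c * |V(H)|^(1-ε)`. -/
def MemGSep {V : Type u} (G : SimpleGraph V) (c ε : ℝ) : Prop :=
  ∀ (S : Set V) (H : SimpleGraph S), H ≤ G.induce S →
    ∃ C : Set S, IsBalancedSeparator H C ∧ (C.ncard : ℝ) ≤ c * (S.ncard : ℝ) ^ (1 - ε)

/-- A model of a graph `H` of depth `r` in `G` (witnessing that `H` is obtained from a
subgraph of `G` by contracting vertex-disjoint subgraphs of radius at most `r`). -/
structure MinorModel {V : Type u} {W : Type w} (G : SimpleGraph V) (H : SimpleGraph W)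
    (r : ℕ) where
  B : W → Set V
  disj : ∀ i j : W, i ≠ j → Disjoint (B i) (B j)
  conn : ∀ i, (G.induce (B i)).Connected
  rad : ∀ i, ∃ v : B i, ∀ u : B i, (G.induce (B i)).dist v u ≤ r
  adj : ∀ i j : W, H.Adj i j → ∃ u ∈ B i, ∃ v ∈ B j, G.Adj u v

/-- `∇_r(G)`: the maximum average degree of a graph obtained from a subgraph of `G`
by contracting vertex-disjoint subgraphs of radius at most `r`. -/
noncomputable def nabla {V : Type u} (G : SimpleGraph V) (r : ℕ) : ℝ :=
  sSup { x | ∃ (m : ℕ) (H : SimpleGraph (Fin m)), 0 < m ∧ Nonempty (MinorModel G H r) ∧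
    x = 2 * (H.edgeSet.ncard : ℝ) / m }

/-- A tree decomposition of `G`. -/
structure TreeDecomp {V : Type u} (G : SimpleGraph V) where
  ι : Type u
  T : SimpleGraph ι
  tree : T.IsTree
  bag : ι → Set V
  hedge : ∀ u v : V, G.Adj u v → ∃ z, u ∈ bag z ∧ v ∈ bag z
  hvert : ∀ v : V, (T.induce {z | v ∈ bag z}).Connected

/-- `G` has treewidth at most `k`. -/
def TreewidthLE {V : Type u} (G : SimpleGraph V) (k : ℕ) : Prop :=
  ∃ D : TreeDecomp G, ∀ z, (D.bag z).ncard ≤ k + 1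

/-- `coTW_k(G)`: sets of vertices whose removal brings the treewidth down to at most `k`. -/
def coTW {V : Type u} (G : SimpleGraph V) (k : ℕ) : Set (Set V) :=
  { X | TreewidthLE (G.induce Xᶜ) k }

/-- An `ε`-thin (finitely supported) probability distribution on a collection `𝒳`
of subsets of the vertex set. -/
structure ThinDist {V : Type u} (𝒳 : Set (Set V)) (ε : ℝ) where
  supp : Finset (Set V)
  p : Set V → ℝ
  nonneg : ∀ X, 0 ≤ p X
  mem : ∀ X ∈ supp, X ∈ 𝒳
  zero_outside : ∀ X ∉ supp, p X = 0
  total : ∑ X ∈ supp, p X = 1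
  thin : ∀ v : V, ∑ X ∈ supp, (if v ∈ X then p X else 0) ≤ ε


namespace PRS


variable {V : Type} [Fintype V] {G : SimpleGraph V}

/-- Reachability via a walk whose support stays in `A`. -/
def RW (G : SimpleGraph V) (A : Set V) (u v : V) : Prop :=
  ∃ w : G.Walk u v, ∀ x ∈ w.support, x ∈ A

/-- The connected component of `v` inside `A`. -/
def cmpt (G : SimpleGraph V) (A : Set V) (v : V) : Set V := {u | RW G A v u}

lemma RW.refl {A : Set V} {v : V} (hv : v ∈ A) : RW G A v v :=
  ⟨SimpleGraph.Walk.nil, by simp [hv]⟩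

lemma RW.mem_left {A : Set V} {u v : V} (h : RW G A u v) : u ∈ A :=
  h.choose_spec u h.choose.start_mem_support

lemma RW.mem_right {A : Set V} {u v : V} (h : RW G A u v) : v ∈ A :=
  h.choose_spec v h.choose.end_mem_support

lemma RW.symm {A : Set V} {u v : V} (h : RW G A u v) : RW G A v u := by
  obtain ⟨w, hw⟩ := h
  refine ⟨w.reverse, ?_⟩
  intro x hx
  rw [SimpleGraph.Walk.support_reverse] at hx
  exact hw x (List.mem_reverse.mp hx)

lemma RW.trans {A : Set V} {u v x : V} (h : RW G A u v) (h' : RW G A v x) : RW G A u x := by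
  obtain ⟨w, hw⟩ := h; obtain ⟨w', hw'⟩ := h'
  refine ⟨w.append w', ?_⟩
  intro y hy
  rcases (SimpleGraph.Walk.mem_support_append_iff _ _).mp hy with h1 | h1
  · exact hw y h1
  · exact hw' y h1

lemma RW.adj {A : Set V} {u v x : V} (h : RW G A u v) (hx : x ∈ A) (ha : G.Adj v x) :
    RW G A u x := by
  obtain ⟨w, hw⟩ := h
  refine ⟨w.concat ha, ?_⟩
  intro y hy
  rw [SimpleGraph.Walk.support_concat] at hy
  rcases List.mem_append.mp hy with h1 | h1
  · exact hw y h1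
  · rw [List.mem_singleton] at h1; subst h1; exact hx

lemma mem_cmpt_self {A : Set V} {v : V} (hv : v ∈ A) : v ∈ cmpt G A v := RW.refl hv

lemma cmpt_subset {A : Set V} {v : V} : cmpt G A v ⊆ A := fun _ h => RW.mem_right h

lemma cmpt_mono {A A' : Set V} (h : A ⊆ A') (v : V) : cmpt G A v ⊆ cmpt G A' v := by
  intro u hu; obtain ⟨w, hw⟩ := hu; exact ⟨w, fun x hx => h (hw x hx)⟩

lemma cmpt_eq_of_mem {A : Set V} {v z : V} (hz : z ∈ cmpt G A v) :
    cmpt G A z = cmpt G A v := by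
  ext u
  constructor
  · intro hu; exact RW.trans hz hu
  · intro hu; exact RW.trans (RW.symm hz) hu

/-- Each vertex of the witness walk is itself reachable within `A`. -/
lemma RW.support_mem {A : Set V} {u v : V} (w : G.Walk u v) (hw : ∀ x ∈ w.support, x ∈ A)
    {x : V} (hx : x ∈ w.support) : RW G A u x :=
  ⟨w.takeUntil x hx, fun y hy => hw y (w.support_takeUntil_subset hx hy)⟩

/-- A witness walk can be taken inside the component itself. -/
lemma RW.within {A : Set V} {v u : V} (h : RW G A v u) :
    ∃ w : G.Walk v u, ∀ x ∈ w.support, x ∈ cmpt G A v := by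
  obtain ⟨w, hw⟩ := h
  exact ⟨w, fun x hx => RW.support_mem w hw hx⟩

/-- Walk induction for closed sets. -/
lemma walk_closed {A P : Set V} (hcl : ∀ x ∈ P, ∀ y ∈ A, G.Adj x y → y ∈ P) :
    ∀ {a b : V}, a ∈ P → (w : G.Walk a b) → (∀ x ∈ w.support, x ∈ A) → b ∈ P := by
  intro a b ha w
  induction w with
  | nil => intro _; exact ha
  | @cons u y b h p ih =>
    intro hsupp
    have hy : y ∈ A := hsupp y (by simp [SimpleGraph.Walk.support_cons])
    exact ih (hcl u ha y hy h) (fun x hx => hsupp x (by simp [SimpleGraph.Walk.support_cons, hx]))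

lemma cmpt_closed {A : Set V} {v : V} {x y : V} (hx : x ∈ cmpt G A v) (hy : y ∈ A)
    (ha : G.Adj x y) : y ∈ cmpt G A v := RW.adj hx hy ha


variable {V : Type} [Fintype V] {G : SimpleGraph V}

/-- BFS ball of radius `r` around `v₀` inside the set `K`. -/
def ball (G : SimpleGraph V) (K : Set V) (v₀ : V) : ℕ → Set V
  | 0 => {v₀}
  | r + 1 => ball G K v₀ r ∪ {u | u ∈ K ∧ ∃ x ∈ ball G K v₀ r, G.Adj x u}

lemma ball_succ (K : Set V) (v₀ : V) (r : ℕ) :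
    ball G K v₀ (r+1) = ball G K v₀ r ∪ {u | u ∈ K ∧ ∃ x ∈ ball G K v₀ r, G.Adj x u} := rfl

lemma ball_subset_succ (K : Set V) (v₀ : V) (r : ℕ) :
    ball G K v₀ r ⊆ ball G K v₀ (r+1) := by
  rw [ball_succ]; exact Set.subset_union_left

lemma ball_mono (K : Set V) (v₀ : V) {r s : ℕ} (h : r ≤ s) :
    ball G K v₀ r ⊆ ball G K v₀ s := by
  induction s with
  | zero => cases (Nat.le_zero.mp h); exact subset_rfl
  | succ s ih =>
    rcases Nat.lt_or_ge r (s+1) with h1 | h1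
    · exact (ih (Nat.lt_succ_iff.mp h1)).trans (ball_subset_succ K v₀ s)
    · have : r = s + 1 := le_antisymm h h1
      subst this; exact subset_rfl

lemma ball_subset_K {K : Set V} {v₀ : V} (hv₀ : v₀ ∈ K) (r : ℕ) :
    ball G K v₀ r ⊆ K := by
  induction r with
  | zero => intro x hx; rw [Set.mem_singleton_iff.mp hx]; exact hv₀
  | succ r ih =>
    intro x hx
    rcases hx with hx | hx
    · exact ih hx
    · exact hx.1

lemma mem_ball_self (K : Set V) (v₀ : V) (r : ℕ) : v₀ ∈ ball G K v₀ r :=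
  ball_mono K v₀ (Nat.zero_le r) rfl

lemma ball_adj {K : Set V} {v₀ : V} {r : ℕ} {x u : V} (hx : x ∈ ball G K v₀ r)
    (hu : u ∈ K) (ha : G.Adj x u) : u ∈ ball G K v₀ (r+1) :=
  Or.inr ⟨hu, x, hx, ha⟩

/-- Walk extraction from balls. -/
lemma ball_walk {K : Set V} {v₀ : V} {r : ℕ} {u : V} (hu : u ∈ ball G K v₀ r) :
    ∃ w : G.Walk v₀ u, (∀ x ∈ w.support, x ∈ ball G K v₀ r) ∧ w.length ≤ r := by
  induction r generalizing u with
  | zero =>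
    have : u = v₀ := Set.mem_singleton_iff.mp hu
    subst this
    refine ⟨SimpleGraph.Walk.nil, ?_, by simp⟩
    intro x hx
    simp only [SimpleGraph.Walk.support_nil, List.mem_singleton] at hx
    subst hx
    exact Set.mem_singleton _
  | succ r ih =>
    rcases hu with hu | ⟨huK, x, hx, ha⟩
    · obtain ⟨w, hw1, hw2⟩ := ih hu
      exact ⟨w, fun y hy => ball_subset_succ K v₀ r (hw1 y hy), hw2.trans (Nat.le_succ r)⟩
    · obtain ⟨w, hw1, hw2⟩ := ih hx
      refine ⟨w.concat ha, ?_, ?_⟩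
      · intro y hy
        rw [SimpleGraph.Walk.support_concat] at hy
        rcases List.mem_append.mp hy with h1 | h1
        · exact ball_subset_succ K v₀ r (hw1 y h1)
        · rw [List.mem_singleton] at h1; subst h1
          exact ball_adj hx huK ha
      · rw [SimpleGraph.Walk.length_concat]; omega

lemma ball_stab {K : Set V} {v₀ : V} {r : ℕ}
    (h : ball G K v₀ (r+1) = ball G K v₀ r) {s : ℕ} (hs : r ≤ s) :
    ball G K v₀ s = ball G K v₀ r := by
  induction s with
  | zero => cases Nat.le_zero.mp hs; rfl
  | succ s ih =>
    rcases Nat.lt_or_ge r (s+1) with h1 | h1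
    · have hsr : r ≤ s := Nat.lt_succ_iff.mp h1
      have := ih hsr
      rw [ball_succ, this, ← ball_succ, h]
    · have : r = s + 1 := le_antisymm hs h1
      rw [this]

/-- If the ball stabilises, it exhausts the component. -/
lemma ball_exhaust {A : Set V} {v₀ : V} (hv₀ : v₀ ∈ A) {r : ℕ}
    (h : ball G (cmpt G A v₀) (v₀) (r+1) = ball G (cmpt G A v₀) v₀ r) :
    cmpt G A v₀ ⊆ ball G (cmpt G A v₀) v₀ r := by
  set K := cmpt G A v₀ with hK
  intro u hu
  obtain ⟨w, hw⟩ := RW.within hu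
  refine walk_closed (A := K) (P := ball G K v₀ r) ?_ (mem_ball_self K v₀ r) w
    (fun x hx => hw x hx)
  intro x hx y hy ha
  have : y ∈ ball G K v₀ (r+1) := ball_adj hx hy ha
  rwa [h] at this

/-- Walks staying in `K \ L r` that start in the ball stay in the ball. -/
lemma ball_side {K : Set V} {v₀ : V} {r : ℕ} {a b : V}
    (ha : a ∈ ball G K v₀ r) (w : G.Walk a b)
    (hw : ∀ x ∈ w.support, x ∈ K \ (ball G K v₀ (r+1) \ ball G K v₀ r)) :
    b ∈ ball G K v₀ r := by
  refine walk_closed (A := K \ (ball G K v₀ (r+1) \ ball G K v₀ r)) (P := ball G K v₀ r) ?_ ha w hw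
  intro x hx y hy hadj
  have h1 : y ∈ ball G K v₀ (r+1) := ball_adj hx hy.1 hadj
  by_contra h2
  exact hy.2 ⟨h1, h2⟩


variable {V : Type} [Fintype V] {G : SimpleGraph V}

lemma nat_two_mul_pow_le {ℓ : ℕ} (hℓ : 1 ≤ ℓ) : 2 * ℓ ^ ℓ ≤ (ℓ + 1) ^ ℓ := by
  have hpos : (0:ℝ) < (ℓ:ℝ) := by exact_mod_cast Nat.lt_of_lt_of_le Nat.zero_lt_one hℓ
  have h1 : (2:ℝ) ≤ (1 + 1/(ℓ:ℝ)) ^ ℓ := by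
    have h0 : (0:ℝ) ≤ 1/(ℓ:ℝ) := by positivity
    have hnn : (-2:ℝ) ≤ 1/(ℓ:ℝ) := by linarith
    have h := one_add_mul_le_pow hnn ℓ
    have heq : 1 + (ℓ:ℝ) * (1/(ℓ:ℝ)) = 2 := by
      rw [mul_one_div, div_self (ne_of_gt hpos)]; norm_num
    rw [heq] at h
    exact h
  have h2 : (2:ℝ) * (ℓ:ℝ)^ℓ ≤ ((ℓ:ℝ) + 1) ^ ℓ := by
    have hp : (0:ℝ) < (ℓ:ℝ)^ℓ := by positivity
    calc (2:ℝ) * (ℓ:ℝ)^ℓ ≤ (1 + 1/(ℓ:ℝ))^ℓ * (ℓ:ℝ)^ℓ := by nlinarith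
    _ = ((1 + 1/(ℓ:ℝ)) * (ℓ:ℝ))^ℓ := by rw [mul_pow]
    _ = ((ℓ:ℝ) + 1)^ℓ := by
      congr 1
      field_simp
  exact_mod_cast h2

lemma key_pow_ineq {ℓ T n : ℕ} (hℓ : 1 ≤ ℓ) (hT : n + 1 ≤ 2 ^ T) :
    (n + 1) * ℓ ^ (ℓ * T) ≤ (ℓ + 1) ^ (ℓ * T) := by
  calc (n + 1) * ℓ ^ (ℓ * T) ≤ 2 ^ T * ℓ ^ (ℓ * T) := Nat.mul_le_mul_right _ hT
  _ = 2 ^ T * (ℓ ^ ℓ) ^ T := by rw [← pow_mul, Nat.mul_comm ℓ T, pow_mul, ← pow_mul, Nat.mul_comm T ℓ]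
  _ = (2 * ℓ ^ ℓ) ^ T := by rw [mul_pow]
  _ ≤ ((ℓ + 1) ^ ℓ) ^ T := Nat.pow_le_pow_left (nat_two_mul_pow_le hℓ) T
  _ = (ℓ + 1) ^ (ℓ * T) := by rw [← pow_mul]

lemma exists_cut {K : Set V} {v₀ : V} (hv₀ : v₀ ∈ K) {ℓ d : ℕ} (hℓ : 1 ≤ ℓ)
    (hd : d = 2 * ℓ * Nat.clog 2 (Fintype.card V + 1))
    (hnr : ¬ K ⊆ ball G K v₀ d) :
    ∃ r, r < d ∧
      ((2 * (ball G K v₀ r).ncard < K.ncard ∧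
        ℓ * (ball G K v₀ (r+1) \ ball G K v₀ r).ncard ≤ (ball G K v₀ r).ncard) ∨
      (K.ncard ≤ 2 * (ball G K v₀ r).ncard ∧
        ℓ * (ball G K v₀ (r+1) \ ball G K v₀ r).ncard + (ball G K v₀ (r+1)).ncard ≤ K.ncard)) := by
  set n := Fintype.card V with hn
  set T := Nat.clog 2 (n + 1) with hTdef
  by_contra hno
  push_neg at hno
  -- notation
  set b : ℕ → ℕ := fun r => (ball G K v₀ r).ncard with hb
  set lc : ℕ → ℕ := fun r => (ball G K v₀ (r+1) \ ball G K v₀ r).ncard with hlc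
  have hd2 : d = 2 * (ℓ * T) := by rw [hd]; ring
  have hsum : ∀ r, b (r+1) = b r + lc r := by
    intro r
    have hsub : ball G K v₀ r ⊆ ball G K v₀ (r+1) := ball_mono K v₀ (Nat.le_succ r)
    have h2 : ball G K v₀ r ∪ (ball G K v₀ (r+1) \ ball G K v₀ r) = ball G K v₀ (r+1) :=
      Set.union_diff_cancel hsub
    have h3 := Set.ncard_union_eq (s := ball G K v₀ r)
      (t := ball G K v₀ (r+1) \ ball G K v₀ r) Set.disjoint_sdiff_right
      (Set.toFinite _) (Set.toFinite _)
    rw [h2] at h3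
    exact h3
  have hbK : ∀ r, b r ≤ K.ncard := fun r =>
    Set.ncard_le_ncard (ball_subset_K hv₀ r) (Set.toFinite _)
  have hKn : K.ncard ≤ n := by
    rw [hn]
    have := Set.ncard_le_ncard (Set.subset_univ K) (Set.toFinite _)
    rwa [Set.ncard_univ, Nat.card_eq_fintype_card] at this
  have hbmono : ∀ {r s : ℕ}, r ≤ s → b r ≤ b s := fun h =>
    Set.ncard_le_ncard (ball_mono K v₀ h) (Set.toFinite _)
  have hT2 : n + 1 ≤ 2 ^ T := Nat.le_pow_clog Nat.one_lt_two _
  have hb0 : b 0 = 1 := by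
    rw [hb]; simp only; exact Set.ncard_singleton v₀
  have hlpos : ∀ X : ℕ, 0 < ℓ ^ X := fun X => Nat.pow_pos (by omega)
  -- Phase 1
  have hm : ∃ r, r ≤ ℓ * T ∧ K.ncard ≤ 2 * b r := by
    by_contra hm
    push_neg at hm
    have grow : ∀ r, r ≤ ℓ * T → (ℓ+1) ^ r ≤ ℓ ^ r * b r := by
      intro r
      induction r with
      | zero => intro _; simp [hb0]
      | succ r ih =>
        intro hr
        have hrT : r ≤ ℓ * T := Nat.le_of_succ_le hr
        have hprev := ih hrT
        have hrd : r < d := by omega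
        have hlt : b r < ℓ * lc r := (hno r hrd).1 (hm r hrT)
        have h1 : (ℓ+1) * b r ≤ ℓ * b (r+1) := by
          calc (ℓ+1) * b r = ℓ * b r + b r := by ring
          _ ≤ ℓ * b r + ℓ * lc r := Nat.add_le_add_left (Nat.le_of_lt hlt) _
          _ = ℓ * (b r + lc r) := by ring
          _ = ℓ * b (r+1) := by rw [hsum r]
        calc (ℓ+1) ^ (r+1) = (ℓ+1) * (ℓ+1)^r := by ring
        _ ≤ (ℓ+1) * (ℓ^r * b r) := Nat.mul_le_mul_left _ hprev
        _ = ℓ^r * ((ℓ+1) * b r) := by ring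
        _ ≤ ℓ^r * (ℓ * b (r+1)) := Nat.mul_le_mul_left _ h1
        _ = ℓ^(r+1) * b (r+1) := by ring
    have hfin : (ℓ+1) ^ (ℓ*T) ≤ ℓ ^ (ℓ*T) * b (ℓ*T) := grow (ℓ*T) le_rfl
    have hpow := key_pow_ineq hℓ hT2
    have hcomb : (n+1) * ℓ ^ (ℓ*T) ≤ b (ℓ*T) * ℓ ^ (ℓ*T) := by
      calc (n+1) * ℓ ^ (ℓ*T) ≤ (ℓ+1) ^ (ℓ*T) := hpow
      _ ≤ ℓ ^ (ℓ*T) * b (ℓ*T) := hfin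
      _ = b (ℓ*T) * ℓ ^ (ℓ*T) := by ring
    have : n + 1 ≤ b (ℓ*T) := Nat.le_of_mul_le_mul_right hcomb (hlpos _)
    have := hbK (ℓ*T)
    omega
  obtain ⟨m, hmT, hm2⟩ := hm
  -- Phase 2
  have decay : ∀ s, s ≤ ℓ * T → (ℓ+1)^s * (K.ncard - b (m+s)) ≤ ℓ^s * (K.ncard - b m) := by
    intro s
    induction s with
    | zero => intro _; simp
    | succ s ih =>
      intro hs
      have hsT : s ≤ ℓ * T := Nat.le_of_succ_le hs
      have hprev := ih hsT
      have hrd : m + s < d := by omega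
      have hm2' : K.ncard ≤ 2 * b (m+s) := le_trans hm2 (by
        have := hbmono (Nat.le_add_right m s); omega)
      have hlt : K.ncard < ℓ * lc (m+s) + b (m+s+1) := (hno (m+s) hrd).2 hm2'
      have key : (ℓ+1) * (K.ncard - b (m+s+1)) ≤ ℓ * (K.ncard - b (m+s)) := by
        have h1 := hsum (m+s)
        have h2 := hbK (m+s+1)
        have h3 := hbK (m+s)
        -- let c := kk - b(m+s+1), then kk - b(m+s) = c + lc
        have hc : K.ncard - b (m+s) = (K.ncard - b (m+s+1)) + lc (m+s) := by omega
        have hcl : K.ncard - b (m+s+1) ≤ ℓ * lc (m+s) := by omega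
        calc (ℓ+1) * (K.ncard - b (m+s+1))
            = ℓ * (K.ncard - b (m+s+1)) + (K.ncard - b (m+s+1)) := by ring
        _ ≤ ℓ * (K.ncard - b (m+s+1)) + ℓ * lc (m+s) := Nat.add_le_add_left hcl _
        _ = ℓ * ((K.ncard - b (m+s+1)) + lc (m+s)) := by ring
        _ = ℓ * (K.ncard - b (m+s)) := by rw [← hc]
      calc (ℓ+1)^(s+1) * (K.ncard - b (m+(s+1)))
          = (ℓ+1)^s * ((ℓ+1) * (K.ncard - b (m+s+1))) := by ring_nf
      _ ≤ (ℓ+1)^s * (ℓ * (K.ncard - b (m+s))) := Nat.mul_le_mul_left _ key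
      _ = ℓ * ((ℓ+1)^s * (K.ncard - b (m+s))) := by ring
      _ ≤ ℓ * (ℓ^s * (K.ncard - b m)) := Nat.mul_le_mul_left _ hprev
      _ = ℓ^(s+1) * (K.ncard - b m) := by ring
  have hfinal := decay (ℓ*T) le_rfl
  have hczero : K.ncard - b (m + ℓ*T) = 0 := by
    by_contra hc
    have hc1 : 1 ≤ K.ncard - b (m + ℓ*T) := Nat.one_le_iff_ne_zero.mpr hc
    have hA : (n+1) * ℓ^(ℓ*T) ≤ (ℓ+1)^(ℓ*T) * (K.ncard - b (m + ℓ*T)) := by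
      calc (n+1) * ℓ^(ℓ*T) ≤ (ℓ+1)^(ℓ*T) := key_pow_ineq hℓ hT2
      _ = (ℓ+1)^(ℓ*T) * 1 := by ring
      _ ≤ (ℓ+1)^(ℓ*T) * (K.ncard - b (m + ℓ*T)) := Nat.mul_le_mul_left _ hc1
    have hB : (ℓ+1)^(ℓ*T) * (K.ncard - b (m + ℓ*T)) ≤ ℓ^(ℓ*T) * n := by
      calc (ℓ+1)^(ℓ*T) * (K.ncard - b (m + ℓ*T)) ≤ ℓ^(ℓ*T) * (K.ncard - b m) := hfinal
      _ ≤ ℓ^(ℓ*T) * n := Nat.mul_le_mul_left _ (by have := hKn; omega)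
    have hAB : (n+1) * ℓ^(ℓ*T) ≤ n * ℓ^(ℓ*T) := by
      calc (n+1) * ℓ^(ℓ*T) ≤ ℓ^(ℓ*T) * n := le_trans hA hB
      _ = n * ℓ^(ℓ*T) := by ring
    have := Nat.le_of_mul_le_mul_right hAB (hlpos _)
    omega
  -- so K ⊆ ball (m + ℓT) ⊆ ball d
  have hble : K.ncard ≤ b (m + ℓ*T) := by omega
  have heq : ball G K v₀ (m + ℓ*T) = K :=
    Set.eq_of_subset_of_ncard_le (ball_subset_K hv₀ _) hble (Set.toFinite _)
  have hmt : m + ℓ*T ≤ d := by omega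
  have hsub : K ⊆ ball G K v₀ d := by
    intro x hx
    have hx2 : x ∈ ball G K v₀ (m + ℓ*T) := by rw [heq]; exact hx
    exact ball_mono K v₀ hmt hx2
  exact hnr hsub


variable {V : Type} [Fintype V] {G : SimpleGraph V}

/-- From a `G`-walk staying in `B`, an induced walk of the same or smaller length. -/
lemma exists_induce_walk {B : Set V} :
    ∀ {u v : V} (w : G.Walk u v), (∀ x ∈ w.support, x ∈ B) →
      ∀ (hu : u ∈ B) (hv : v ∈ B),
      ∃ p : (G.induce B).Walk ⟨u, hu⟩ ⟨v, hv⟩, p.length ≤ w.length := by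
  intro u v w
  induction w with
  | nil =>
    intro _ hu hv
    exact ⟨SimpleGraph.Walk.nil, by simp⟩
  | @cons a y b h p ih =>
    intro hsupp ha hb
    have hy : y ∈ B := hsupp y (by simp [SimpleGraph.Walk.support_cons])
    have hadj : (G.induce B).Adj ⟨a, ha⟩ ⟨y, hy⟩ := by
      simp only [SimpleGraph.comap_adj, Function.Embedding.coe_subtype]
      exact h
    obtain ⟨q, hq⟩ := ih (fun x hx => hsupp x (by simp [SimpleGraph.Walk.support_cons, hx])) hy hb
    exact ⟨SimpleGraph.Walk.cons hadj q, by simpa using Nat.succ_le_succ hq⟩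

/-- From an induced walk, a `G`-walk staying in `B`. -/
lemma induce_walk_to_RW {B : Set V} :
    ∀ {x y : ↥B} (p : (G.induce B).Walk x y),
      ∃ w : G.Walk x.1 y.1, ∀ z ∈ w.support, z ∈ B := by
  intro x y p
  induction p with
  | @nil a => exact ⟨SimpleGraph.Walk.nil, by
      intro z hz; simp at hz; subst hz; exact a.2⟩
  | @cons a c b h p ih =>
    obtain ⟨w, hw⟩ := ih
    have hadj : G.Adj a.1 c.1 := h
    refine ⟨SimpleGraph.Walk.cons hadj w, ?_⟩
    intro z hz
    rw [SimpleGraph.Walk.support_cons] at hz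
    rcases List.mem_cons.mp hz with h1 | h1
    · subst h1; exact a.2
    · exact hw z h1

/-- The "good branch set" predicate: a radius-`d` center via walks. -/
def Pb (G : SimpleGraph V) (d : ℕ) (B : Set V) : Prop :=
  ∃ v₀ ∈ B, ∀ u ∈ B, ∃ w : G.Walk v₀ u, (∀ x ∈ w.support, x ∈ B) ∧ w.length ≤ d

lemma omega_bddAbove (d : ℕ) :
    BddAbove {m | Nonempty (CliqueModel G m d)} := by
  classical
  refine ⟨Fintype.card V, ?_⟩
  rintro m ⟨M⟩
  let f : Fin m → V := fun i => ((M.conn i).nonempty.some : V)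
  have hmemf : ∀ i, f i ∈ M.B i := fun i => ((M.conn i).nonempty.some).2
  have hinj : Function.Injective f := by
    intro i j hij
    by_contra hne
    have hd := M.disj i j hne
    have h1 := hmemf i
    rw [hij] at h1
    exact (Set.disjoint_left.mp hd h1) (hmemf j)
  simpa using Fintype.card_le_of_injective _ hinj

/-- Any pairwise-disjoint, pairwise-adjacent family of good branch sets
has size at most `ω_d(G)`. -/
lemma card_le_omega {d : ℕ} (M : Finset (Set V))
    (hPb : ∀ B ∈ M, Pb G d B)
    (hMM : ∀ B ∈ M, ∀ B' ∈ M, B ≠ B' → Disjoint B B')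
    (hadj : ∀ B ∈ M, ∀ B' ∈ M, B ≠ B' → ∃ u ∈ B, ∃ v ∈ B', G.Adj u v) :
    M.card ≤ omegaDepth G d := by
  classical
  have hcard : Fintype.card ↥M = M.card := Fintype.card_coe M
  set e : Fin M.card ≃ ↥M := (Fintype.equivFinOfCardEq hcard).symm with he
  have hmem : ∀ i : Fin M.card, ((e i : Set V)) ∈ M := fun i => (e i).2
  have hBne : ∀ i j : Fin M.card, i ≠ j → (e i : Set V) ≠ (e j : Set V) := by
    intro i j hij hEq
    exact hij (e.injective (Subtype.ext hEq))
  have model : CliqueModel G M.card d := by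
    refine ⟨fun i => (e i : Set V), ?_, ?_, ?_, ?_⟩
    · intro i j hij
      exact hMM _ (hmem i) _ (hmem j) (hBne i j hij)
    · intro i
      beta_reduce
      obtain ⟨v₀, hv₀, hwalk⟩ := hPb _ (hmem i)
      rw [SimpleGraph.connected_iff_exists_forall_reachable]
      refine ⟨⟨v₀, hv₀⟩, ?_⟩
      intro w
      obtain ⟨ww, hww, _⟩ := hwalk w.1 w.2
      obtain ⟨pw, _⟩ := exists_induce_walk ww hww hv₀ w.2
      exact ⟨pw⟩
    · intro i
      beta_reduce
      obtain ⟨v₀, hv₀, hwalk⟩ := hPb _ (hmem i)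
      refine ⟨⟨v₀, hv₀⟩, ?_⟩
      intro u
      obtain ⟨w, hw, hlen⟩ := hwalk u.1 u.2
      obtain ⟨p, hp⟩ := exists_induce_walk w hw hv₀ u.2
      have : (G.induce _).dist ⟨v₀, hv₀⟩ u ≤ p.length := SimpleGraph.dist_le p
      omega
    · intro i j hij
      exact hadj _ (hmem i) _ (hmem j) (hBne i j (Fin.ne_of_lt hij))
  exact le_csSup (omega_bddAbove d) ⟨model⟩



lemma ball_ncard_succ {K : Set V} (v₀ : V) (r : ℕ) :
    (ball G K v₀ (r+1)).ncard =
      (ball G K v₀ r).ncard + (ball G K v₀ (r+1) \ ball G K v₀ r).ncard := by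
  have hsub : ball G K v₀ r ⊆ ball G K v₀ (r+1) := ball_subset_succ K v₀ r
  have h2 : ball G K v₀ r ∪ (ball G K v₀ (r+1) \ ball G K v₀ r) = ball G K v₀ (r+1) :=
    Set.union_diff_cancel hsub
  have h3 := Set.ncard_union_eq (s := ball G K v₀ r)
    (t := ball G K v₀ (r+1) \ ball G K v₀ r) Set.disjoint_sdiff_right
    (Set.toFinite _) (Set.toFinite _)
  rw [h2] at h3
  exact h3

lemma ncard_le_card (A : Set V) : A.ncard ≤ Fintype.card V := by
  have := Set.ncard_le_ncard (Set.subset_univ A) (Set.toFinite _)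
  rwa [Set.ncard_univ, Nat.card_eq_fintype_card] at this

lemma inter_nonempty_of_big {A B : Set V}
    (hA : 2 * Fintype.card V < 3 * A.ncard) (hB : 2 * Fintype.card V < 3 * B.ncard) :
    (A ∩ B).Nonempty := by
  have h1 := Set.ncard_inter_add_ncard_union A B (Set.toFinite _) (Set.toFinite _)
  have h2 := ncard_le_card (A ∪ B)
  have h3 : (A ∩ B).ncard ≠ 0 := by omega
  exact Set.nonempty_of_ncard_ne_zero h3

/-- Big components nest: a big component in a subregion is inside the big component. -/
lemma big_cmpt_subset {R R₂ : Set V} (hsub : R₂ ⊆ R) {v₀ x : V}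
    (hbigK : 2 * Fintype.card V < 3 * (cmpt G R v₀).ncard)
    (hbig2 : 2 * Fintype.card V < 3 * (cmpt G R₂ x).ncard) :
    cmpt G R₂ x ⊆ cmpt G R v₀ := by
  obtain ⟨z, hz2, hzK⟩ := inter_nonempty_of_big hbig2 hbigK
  have hzx : z ∈ cmpt G R x := cmpt_mono hsub x hz2
  have e1 : cmpt G R z = cmpt G R x := cmpt_eq_of_mem hzx
  have e2 : cmpt G R z = cmpt G R v₀ := cmpt_eq_of_mem hzK
  intro u hu
  have : u ∈ cmpt G R x := cmpt_mono hsub x hu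
  rw [← e1, e2] at this
  exact this

noncomputable def bigSize (G : SimpleGraph V) (R : Set V) : ℕ :=
  sSup {k | ∃ v ∈ R, k = (cmpt G R v).ncard ∧ 2 * Fintype.card V < 3 * k}

lemma bigSize_le_of {R : Set V} {c : ℕ}
    (h : ∀ x ∈ R, 2 * Fintype.card V < 3 * (cmpt G R x).ncard → (cmpt G R x).ncard ≤ c) :
    bigSize G R ≤ c := by
  by_cases hne : {k | ∃ v ∈ R, k = (cmpt G R v).ncard ∧ 2 * Fintype.card V < 3 * k}.Nonempty
  · refine csSup_le hne ?_
    rintro k ⟨v, hv, rfl, hbig⟩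
    exact h v hv hbig
  · rw [Set.not_nonempty_iff_eq_empty] at hne
    rw [bigSize, hne, csSup_empty]
    exact Nat.zero_le c

lemma bigSize_eq {R : Set V} {v : V} (hv : v ∈ R)
    (hbig : 2 * Fintype.card V < 3 * (cmpt G R v).ncard) :
    bigSize G R = (cmpt G R v).ncard := by
  have hset : {k | ∃ w ∈ R, k = (cmpt G R w).ncard ∧ 2 * Fintype.card V < 3 * k}
      = {(cmpt G R v).ncard} := by
    ext k
    constructor
    · rintro ⟨w, hw, rfl, hbw⟩
      have h1 : cmpt G R w ⊆ cmpt G R v := big_cmpt_subset subset_rfl hbig hbw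
      have h2 : cmpt G R v ⊆ cmpt G R w := big_cmpt_subset subset_rfl hbw hbig
      simp [le_antisymm h1 h2]
    · rintro rfl
      exact ⟨v, hv, rfl, hbig⟩
  rw [bigSize, hset, csSup_singleton]

lemma ncard_biUnion_le {α : Type} (M : Finset α) (F : α → Set V) :
    (⋃ x ∈ (M : Set α), F x).ncard ≤ ∑ x ∈ M, (F x).ncard := by
  classical
  induction M using Finset.induction_on with
  | empty => simp
  | @insert a s ha ih =>
    rw [Finset.coe_insert, Set.biUnion_insert]
    calc (F a ∪ ⋃ x ∈ (s : Set α), F x).ncard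
        ≤ (F a).ncard + (⋃ x ∈ (s : Set α), F x).ncard := Set.ncard_union_le _ _
    _ ≤ (F a).ncard + ∑ x ∈ s, (F x).ncard := Nat.add_le_add_left ih _
    _ = ∑ x ∈ insert a s, (F x).ncard := by rw [Finset.sum_insert ha]

lemma ncard_sUnion_le (M : Finset (Set V)) (c : ℕ) (h : ∀ B ∈ M, B.ncard ≤ c) :
    (⋃₀ (M : Set (Set V))).ncard ≤ M.card * c := by
  rw [Set.sUnion_eq_biUnion]
  calc (⋃ B ∈ (M : Set (Set V)), B).ncard ≤ ∑ B ∈ M, B.ncard := ncard_biUnion_le M id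
  _ ≤ ∑ _B ∈ M, c := Finset.sum_le_sum h
  _ = M.card * c := by rw [Finset.sum_const, smul_eq_mul]

/-- The main recursive construction (Plotkin–Rao–Smith style). -/
theorem core {ℓ dd : ℕ} (hℓ : 1 ≤ ℓ)
    (hdform : dd = 2 * ℓ * Nat.clog 2 (Fintype.card V + 1)) :
    ∀ (meas : ℕ) (S : Set V) (M : Finset (Set V)),
      (∀ B ∈ M, Disjoint B S) →
      (∀ B ∈ M, ∀ B' ∈ M, B ≠ B' → Disjoint B B') →
      (∀ B ∈ M, Pb G dd B) →
      (∀ B ∈ M, B.ncard ≤ (omegaDepth G dd - 1) * dd + 1) →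
      (∀ B ∈ M, ∀ B' ∈ M, B ≠ B' → ∃ u ∈ B, ∃ v ∈ B', G.Adj u v) →
      ℓ * S.ncard + bigSize G ((S ∪ ⋃₀ (M : Set (Set V)))ᶜ) ≤ Fintype.card V →
      (Fintype.card V + 2) * bigSize G ((S ∪ ⋃₀ (M : Set (Set V)))ᶜ) + M.card ≤ meas →
      (1 ≤ dd) →
      ∃ C : Set V,
        (∀ v ∈ Cᶜ, 3 * (cmpt G Cᶜ v).ncard ≤ 2 * Fintype.card V) ∧
        ((C.ncard : ℝ) ≤ (Fintype.card V : ℝ) / ℓ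
          + (dd : ℝ) * (omegaDepth G dd : ℝ) ^ 2) := by
  intro meas
  induction meas using Nat.strong_induction_on with
  | _ meas IH =>
  intro S M hdisjS hdisjM hPbM hsizeM hadjM hS hmeas hd1
  set n := Fintype.card V with hn
  set ω := omegaDepth G dd with hω
  set R := (S ∪ ⋃₀ (M : Set (Set V)))ᶜ with hR
  by_cases hall : ∀ v ∈ R, 3 * (cmpt G R v).ncard ≤ 2 * n
  · -- RETURN CASE
    refine ⟨S ∪ ⋃₀ (M : Set (Set V)), ?_, ?_⟩
    · rw [← hR]; exact hall
    · have hMω : M.card ≤ ω := card_le_omega M hPbM hdisjM hadjM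
      have hU : (⋃₀ (M : Set (Set V))).ncard ≤ M.card * ((ω - 1) * dd + 1) :=
        ncard_sUnion_le M _ hsizeM
      have hC : (S ∪ ⋃₀ (M : Set (Set V))).ncard ≤ S.ncard + M.card * ((ω - 1) * dd + 1) :=
        le_trans (Set.ncard_union_le _ _) (Nat.add_le_add_left hU _)
      have hMd : M.card * ((ω - 1) * dd + 1) ≤ dd * ω ^ 2 := by
        rcases Nat.eq_zero_or_pos ω with h0 | h1
        · have hM0 : M.card = 0 := by omega
          simp [hM0]
        · calc M.card * ((ω - 1) * dd + 1) ≤ ω * ((ω - 1) * dd + 1) :=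
              Nat.mul_le_mul_right _ hMω
          _ = ω * (ω - 1) * dd + ω := by ring
          _ ≤ ω * (ω - 1) * dd + ω * dd := by
              have h2 : ω * 1 ≤ ω * dd := Nat.mul_le_mul_left ω hd1
              omega
          _ = ω * ((ω - 1) + 1) * dd := by ring
          _ = ω * ω * dd := by rw [Nat.sub_add_cancel h1]
          _ = dd * ω ^ 2 := by ring
      have hSn : ℓ * S.ncard ≤ n := by omega
      have hSn' : S.ncard * ℓ ≤ n := by rw [Nat.mul_comm]; exact hSn
      have hl0 : (0 : ℝ) < (ℓ : ℝ) := by exact_mod_cast Nat.lt_of_lt_of_le Nat.zero_lt_one hℓ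
      have hSreal : (S.ncard : ℝ) ≤ (n : ℝ) / ℓ := by
        rw [le_div_iff₀ hl0]
        exact_mod_cast hSn'
      have h1 : ((S ∪ ⋃₀ (M : Set (Set V))).ncard : ℝ)
          ≤ (S.ncard : ℝ) + ((M.card * ((ω - 1) * dd + 1) : ℕ) : ℝ) := by
        exact_mod_cast hC
      have h2 : ((M.card * ((ω - 1) * dd + 1) : ℕ) : ℝ) ≤ ((dd * ω ^ 2 : ℕ) : ℝ) := by
        exact_mod_cast hMd
      have h3 : ((dd * ω ^ 2 : ℕ) : ℝ) = (dd : ℝ) * (ω : ℝ) ^ 2 := by push_cast; ring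
      linarith
  · -- there is a big component
    push_neg at hall
    obtain ⟨v₀, hv₀R, hbig⟩ := hall
    set K := cmpt G R v₀ with hKdef
    have hKR : K ⊆ R := cmpt_subset
    have hv₀K : v₀ ∈ K := mem_cmpt_self hv₀R
    have hbSR : bigSize G R = K.ncard := bigSize_eq hv₀R hbig
    have hKn : K.ncard ≤ n := ncard_le_card K
    have hK1 : 1 ≤ K.ncard := by
      have hne : K.Nonempty := ⟨v₀, hv₀K⟩
      have := (Set.ncard_pos (Set.toFinite K)).mpr hne
      omega
    have hmemRc : ∀ x, x ∈ S ∪ ⋃₀ (M : Set (Set V)) → x ∉ R := by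
      intro x hx hxR
      exact hxR hx
    have hMnotR : ∀ B ∈ M, ∀ x ∈ B, x ∉ R := by
      intro B hB x hx
      exact hmemRc x (Or.inr ⟨B, Finset.mem_coe.mpr hB, hx⟩)
    rw [hbSR] at hS hmeas
    by_cases hpr : ∃ B ∈ M, ∀ x ∈ B, ∀ y ∈ K, ¬ G.Adj x y
    · -- PRUNE
      obtain ⟨B₀, hB₀, hnoadj⟩ := hpr
      have hcard1 : 1 ≤ M.card := Finset.card_pos.mpr ⟨B₀, hB₀⟩
      have hUnion : S ∪ ⋃₀ ((M.erase B₀ : Finset (Set V)) : Set (Set V))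
          = (S ∪ ⋃₀ (M : Set (Set V))) \ B₀ := by
        ext x
        simp only [Set.mem_union, Set.mem_sUnion, Set.mem_diff, Finset.mem_coe,
          Finset.mem_erase]
        constructor
        · rintro (hxS | ⟨B, ⟨hne, hBM⟩, hxB⟩)
          · exact ⟨Or.inl hxS, fun hxB₀ => Set.disjoint_left.mp (hdisjS B₀ hB₀) hxB₀ hxS⟩
          · refine ⟨Or.inr ⟨B, hBM, hxB⟩, fun hxB₀ => ?_⟩
            exact Set.disjoint_left.mp (hdisjM B hBM B₀ hB₀ hne) hxB hxB₀
        · rintro ⟨hxS | ⟨B, hBM, hxB⟩, hxnB₀⟩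
          · exact Or.inl hxS
          · refine Or.inr ⟨B, ⟨?_, hBM⟩, hxB⟩
            rintro rfl
            exact hxnB₀ hxB
      have hR' : (S ∪ ⋃₀ ((M.erase B₀ : Finset (Set V)) : Set (Set V)))ᶜ = R ∪ B₀ := by
        rw [hUnion, hR]
        ext x
        simp only [Set.mem_compl_iff, Set.mem_diff, Set.mem_union]
        tauto
      have hcmpt' : cmpt G (R ∪ B₀) v₀ = K := by
        apply Set.Subset.antisymm
        · intro u hu
          obtain ⟨w, hw⟩ := hu
          refine walk_closed (A := R ∪ B₀) (P := K) ?_ hv₀K w hw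
          intro x hxK y hy hadjxy
          rcases hy with hyR | hyB₀
          · exact cmpt_closed hxK hyR hadjxy
          · exact absurd hadjxy.symm (hnoadj y hyB₀ x hxK)
        · exact cmpt_mono Set.subset_union_left v₀
      have hbS' : bigSize G (R ∪ B₀) = K.ncard := by
        have hv₀' : v₀ ∈ R ∪ B₀ := Or.inl hv₀R
        have hbig' : 2 * n < 3 * (cmpt G (R ∪ B₀) v₀).ncard := by
          rw [hcmpt']
          exact hbig
        rw [bigSize_eq hv₀' hbig', hcmpt']
      have hcarderase : (M.erase B₀).card = M.card - 1 := Finset.card_erase_of_mem hB₀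
      refine IH ((n + 2) * K.ncard + (M.card - 1)) (by omega) S (M.erase B₀)
          (fun B hB => hdisjS B (Finset.mem_of_mem_erase hB))
          (fun B hB B' hB' hne => hdisjM B (Finset.mem_of_mem_erase hB) B'
            (Finset.mem_of_mem_erase hB') hne)
          (fun B hB => hPbM B (Finset.mem_of_mem_erase hB))
          (fun B hB => hsizeM B (Finset.mem_of_mem_erase hB))
          (fun B hB B' hB' hne => hadjM B (Finset.mem_of_mem_erase hB) B'
            (Finset.mem_of_mem_erase hB') hne)
          ?_ ?_ hd1
      · rw [hR', hbS']
        omega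
      · rw [hR', hbS', hcarderase]
    · -- NO PRUNE
      push_neg at hpr
      by_cases hreach : K ⊆ ball G K v₀ dd
      · -- EXTEND
        choose xf hxf yf hyf hadjf using hpr
        have hwex : ∀ (B : Set V) (hB : B ∈ M), ∃ w : G.Walk v₀ (yf B hB),
            (∀ z ∈ w.support, z ∈ ball G K v₀ dd) ∧ w.length ≤ dd :=
          fun B hB => ball_walk (hreach (hyf B hB))
        choose wf hwsupp hwlen using hwex
        set F : Set V → Set V := fun B =>
          if h : B ∈ M then {z | z ∈ (wf B h).support ∧ z ≠ v₀} else ∅ with hF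
        set Bnew : Set V := insert v₀ (⋃ B ∈ (M : Set (Set V)), F B) with hBnewdef
        have hFval : ∀ (B : Set V) (hB : B ∈ M),
            F B = {z | z ∈ (wf B hB).support ∧ z ≠ v₀} := by
          intro B hB
          rw [hF]
          simp only [dif_pos hB]
        have hsupp_sub : ∀ (B : Set V) (hB : B ∈ M), ∀ z ∈ (wf B hB).support, z ∈ Bnew := by
          intro B hB z hz
          by_cases hzv : z = v₀
          · rw [hBnewdef, hzv]
            exact Set.mem_insert _ _
          · rw [hBnewdef]
            refine Set.mem_insert_of_mem _ ?_
            refine Set.mem_biUnion (Finset.mem_coe.mpr hB) ?_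
            rw [hFval B hB]
            exact ⟨hz, hzv⟩
        have hBnew_ball : Bnew ⊆ ball G K v₀ dd := by
          rw [hBnewdef]
          intro z hz
          rcases Set.mem_insert_iff.mp hz with hzv | hz
          · rw [hzv]
            exact mem_ball_self K v₀ dd
          · obtain ⟨B, hBm, hzF⟩ := Set.mem_iUnion₂.mp hz
            have hB : B ∈ M := Finset.mem_coe.mp hBm
            rw [hFval B hB] at hzF
            exact hwsupp B hB z hzF.1
        have hBnewK : Bnew ⊆ K := fun z hz => ball_subset_K hv₀K dd (hBnew_ball hz)
        have hBnewR : Bnew ⊆ R := fun z hz => hKR (hBnewK hz)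
        have hv₀Bnew : v₀ ∈ Bnew := by
          rw [hBnewdef]
          exact Set.mem_insert _ _
        have hPbBnew : Pb G dd Bnew := by
          refine ⟨v₀, hv₀Bnew, ?_⟩
          intro u hu
          rw [hBnewdef] at hu
          rcases Set.mem_insert_iff.mp hu with hzv | hu
          · rw [hzv]
            refine ⟨SimpleGraph.Walk.nil, ?_, by simp⟩
            intro x hx
            simp only [SimpleGraph.Walk.support_nil, List.mem_singleton] at hx
            subst hx
            exact hv₀Bnew
          · obtain ⟨B, hBm, hzF⟩ := Set.mem_iUnion₂.mp hu
            have hB : B ∈ M := Finset.mem_coe.mp hBm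
            rw [hFval B hB] at hzF
            obtain ⟨huw, _⟩ := hzF
            refine ⟨(wf B hB).takeUntil u huw, ?_, ?_⟩
            · intro x hx
              exact hsupp_sub B hB x ((wf B hB).support_takeUntil_subset huw hx)
            · exact le_trans ((wf B hB).length_takeUntil_le huw) (hwlen B hB)
        have hFle : ∀ B ∈ M, (F B).ncard ≤ dd := by
          intro B hB
          have hFeq : F B = {z | z ∈ (wf B hB).support} \ {v₀} := by
            rw [hFval B hB]
            ext z
            simp [Set.mem_diff]
          rw [hFeq]
          have h1 : ({z | z ∈ (wf B hB).support} : Set V) = ↑(wf B hB).support.toFinset := by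
            ext z
            simp
          have h2 : ({z | z ∈ (wf B hB).support} : Set V).ncard ≤ dd + 1 := by
            rw [h1, Set.ncard_coe_finset]
            calc (wf B hB).support.toFinset.card ≤ (wf B hB).support.length :=
              (wf B hB).support.toFinset_card_le
            _ = (wf B hB).length + 1 := SimpleGraph.Walk.length_support _
            _ ≤ dd + 1 := by
              have := hwlen B hB
              omega
          have hv0mem : v₀ ∈ ({z | z ∈ (wf B hB).support} : Set V) :=
            (wf B hB).start_mem_support
          have h3 := Set.ncard_diff_singleton_of_mem hv0mem
          omega
        have hBnew_card : Bnew.ncard ≤ M.card * dd + 1 := by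
          rw [hBnewdef]
          have hbi := ncard_biUnion_le M F
          have hsum := Finset.sum_le_sum hFle
          have hconst : (∑ _B ∈ M, dd) = M.card * dd := by
            rw [Finset.sum_const, smul_eq_mul]
          have hins := Set.ncard_insert_le v₀ (⋃ B ∈ (M : Set (Set V)), F B)
          omega
        have hBnewnotM : Bnew ∉ M := fun hmem => (hMnotR Bnew hmem v₀ hv₀Bnew) hv₀R
        have hcardM' : (insert Bnew M).card = M.card + 1 :=
          Finset.card_insert_of_notMem hBnewnotM
        have hdisjBnew : ∀ B ∈ M, Disjoint Bnew B := by
          intro B hB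
          refine Set.disjoint_left.mpr ?_
          intro x hx hxB
          exact (hMnotR B hB x hxB) (hBnewR hx)
        have hdisjS' : ∀ B ∈ insert Bnew M, Disjoint B S := by
          intro B hB
          rcases Finset.mem_insert.mp hB with rfl | hB
          · refine Set.disjoint_left.mpr ?_
            intro x hx hxS
            exact (hmemRc x (Or.inl hxS)) (hBnewR hx)
          · exact hdisjS B hB
        have hdisjM' : ∀ B ∈ insert Bnew M, ∀ B' ∈ insert Bnew M, B ≠ B' → Disjoint B B' := by
          intro B hB B' hB' hne
          rcases Finset.mem_insert.mp hB with rfl | hB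
          · rcases Finset.mem_insert.mp hB' with h' | hB'
            · exact absurd h'.symm hne
            · exact hdisjBnew B' hB'
          · rcases Finset.mem_insert.mp hB' with rfl | hB'
            · exact (hdisjBnew B hB).symm
            · exact hdisjM B hB B' hB' hne
        have hPbM' : ∀ B ∈ insert Bnew M, Pb G dd B := by
          intro B hB
          rcases Finset.mem_insert.mp hB with rfl | hB
          · exact hPbBnew
          · exact hPbM B hB
        have hadjM' : ∀ B ∈ insert Bnew M, ∀ B' ∈ insert Bnew M, B ≠ B' →
            ∃ u ∈ B, ∃ v ∈ B', G.Adj u v := by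
          intro B hB B' hB' hne
          rcases Finset.mem_insert.mp hB with rfl | hB
          · rcases Finset.mem_insert.mp hB' with h' | hB'
            · exact absurd h'.symm hne
            · exact ⟨yf B' hB', hsupp_sub B' hB' _ (wf B' hB').end_mem_support,
                xf B' hB', hxf B' hB', (hadjf B' hB').symm⟩
          · rcases Finset.mem_insert.mp hB' with rfl | hB'
            · exact ⟨xf B hB, hxf B hB, yf B hB,
                hsupp_sub B hB _ (wf B hB).end_mem_support, hadjf B hB⟩
            · exact hadjM B hB B' hB' hne
        have hMω' : M.card + 1 ≤ ω := by
          have := card_le_omega (insert Bnew M) hPbM' hdisjM' hadjM'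
          rw [hcardM'] at this
          exact this
        have hsizeBnew : Bnew.ncard ≤ (ω - 1) * dd + 1 := by
          have h1 : M.card ≤ ω - 1 := by omega
          have h2 : M.card * dd ≤ (ω - 1) * dd := Nat.mul_le_mul_right dd h1
          omega
        have hsizeM' : ∀ B ∈ insert Bnew M, B.ncard ≤ (ω - 1) * dd + 1 := by
          intro B hB
          rcases Finset.mem_insert.mp hB with rfl | hB
          · exact hsizeBnew
          · exact hsizeM B hB
        have hR'' : (S ∪ ⋃₀ ((insert Bnew M : Finset (Set V)) : Set (Set V)))ᶜ
            = R \ Bnew := by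
          rw [Finset.coe_insert, Set.sUnion_insert, hR]
          ext x
          simp only [Set.mem_compl_iff, Set.mem_diff, Set.mem_union]
          tauto
        have hbigsub : bigSize G (R \ Bnew) ≤ K.ncard - 1 := by
          refine bigSize_le_of ?_
          intro x hx hbigx
          have hsubK : cmpt G (R \ Bnew) x ⊆ K := big_cmpt_subset Set.diff_subset hbig hbigx
          have hneK : cmpt G (R \ Bnew) x ≠ K := by
            intro heq
            have hv : v₀ ∈ cmpt G (R \ Bnew) x := by
              rw [heq]
              exact hv₀K
            have := cmpt_subset hv
            exact this.2 hv₀Bnew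
          have hlt : (cmpt G (R \ Bnew) x).ncard < K.ncard :=
            Set.ncard_lt_ncard (ssubset_of_subset_of_ne hsubK hneK) (Set.toFinite K)
          omega
        have hmul : (n + 2) * bigSize G (R \ Bnew) ≤ (n + 2) * (K.ncard - 1) :=
          Nat.mul_le_mul_left _ hbigsub
        have hface : (n + 2) * K.ncard = (n + 2) * (K.ncard - 1) + (n + 2) := by
          have h1 : K.ncard - 1 + 1 = K.ncard := Nat.sub_add_cancel hK1
          calc (n + 2) * K.ncard = (n + 2) * ((K.ncard - 1) + 1) := by rw [h1]
          _ = (n + 2) * (K.ncard - 1) + (n + 2) := by ring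
        refine IH ((n + 2) * (K.ncard - 1) + M.card + 1) (by omega) S (insert Bnew M)
          hdisjS' hdisjM' hPbM' hsizeM' hadjM' ?_ ?_ hd1
        · rw [hR'']
          omega
        · rw [hR'', hcardM']
          omega
      · -- CUT
        obtain ⟨r, hrd, hcase⟩ := exists_cut hv₀K hℓ hdform hreach
        set L : Set V := ball G K v₀ (r + 1) \ ball G K v₀ r with hLdef
        have hLK : L ⊆ K := fun x hx => ball_subset_K hv₀K (r + 1) hx.1
        have hLR : L ⊆ R := fun x hx => hKR (hLK hx)
        have hbsucc : (ball G K v₀ (r + 1)).ncard = (ball G K v₀ r).ncard + L.ncard :=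
          ball_ncard_succ v₀ r
        have hbrK : (ball G K v₀ (r + 1)).ncard ≤ K.ncard :=
          Set.ncard_le_ncard (ball_subset_K hv₀K _) (Set.toFinite K)
        have hb1 : 1 ≤ (ball G K v₀ r).ncard := by
          have := (Set.ncard_pos (Set.toFinite (ball G K v₀ r))).mpr
            ⟨v₀, mem_ball_self K v₀ r⟩
          omega
        have hLne : 1 ≤ L.ncard := by
          by_contra hcon
          have hL0 : L.ncard = 0 := by omega
          have hLempty : L = ∅ := (Set.ncard_eq_zero (Set.toFinite L)).mp hL0
          have hstab : ball G K v₀ (r + 1) = ball G K v₀ r := by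
            apply Set.Subset.antisymm _ (ball_subset_succ K v₀ r)
            rw [hLdef] at hLempty
            exact Set.diff_eq_empty.mp hLempty
          have hexh : K ⊆ ball G K v₀ r := ball_exhaust hv₀R hstab
          exact hreach (fun z hz => ball_mono K v₀ (Nat.le_of_lt hrd) (hexh hz))
        have hLbound : ℓ * L.ncard ≤ K.ncard := by
          rcases hcase with ⟨h1, h2⟩ | ⟨h1, h2⟩
          · omega
          · omega
        have hbigbound : ∀ x ∈ R \ L, 2 * n < 3 * (cmpt G (R \ L) x).ncard →
            (cmpt G (R \ L) x).ncard + ℓ * L.ncard ≤ K.ncard := by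
          intro x hx hbigx
          have hsubK : cmpt G (R \ L) x ⊆ K := big_cmpt_subset Set.diff_subset hbig hbigx
          have hK''L : ∀ z ∈ cmpt G (R \ L) x, z ∉ L := fun z hz => (cmpt_subset hz).2
          by_cases hside : (cmpt G (R \ L) x ∩ ball G K v₀ r).Nonempty
          · obtain ⟨z, hzK'', hzball⟩ := hside
            have hzx : cmpt G (R \ L) z = cmpt G (R \ L) x := cmpt_eq_of_mem hzK''
            have hKsub : cmpt G (R \ L) x ⊆ ball G K v₀ r := by
              intro u hu
              have hRW : RW G (R \ L) z u := (RW.symm hzK'').trans hu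
              obtain ⟨w, hw⟩ := RW.within hRW
              refine ball_side hzball w ?_
              intro y hy
              have hyK'' : y ∈ cmpt G (R \ L) x := by
                rw [← hzx]
                exact hw y hy
              exact ⟨hsubK hyK'', hK''L y hyK''⟩
            have hcard : (cmpt G (R \ L) x).ncard ≤ (ball G K v₀ r).ncard :=
              Set.ncard_le_ncard hKsub (Set.toFinite _)
            rcases hcase with ⟨h1, h2⟩ | ⟨h1, h2⟩
            · omega
            · omega
          · have hdisjb : ∀ z ∈ cmpt G (R \ L) x, z ∉ ball G K v₀ (r + 1) := by
              intro z hz hzball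
              by_cases hzr : z ∈ ball G K v₀ r
              · exact hside ⟨z, hz, hzr⟩
              · exact hK''L z hz ⟨hzball, hzr⟩
            have hcard : (cmpt G (R \ L) x).ncard + (ball G K v₀ (r + 1)).ncard
                ≤ K.ncard := by
              have hdisj2 : Disjoint (cmpt G (R \ L) x) (ball G K v₀ (r + 1)) :=
                Set.disjoint_left.mpr hdisjb
              have hunion : cmpt G (R \ L) x ∪ ball G K v₀ (r + 1) ⊆ K :=
                Set.union_subset hsubK (ball_subset_K hv₀K _)
              calc (cmpt G (R \ L) x).ncard + (ball G K v₀ (r + 1)).ncard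
                  = (cmpt G (R \ L) x ∪ ball G K v₀ (r + 1)).ncard :=
                    (Set.ncard_union_eq hdisj2 (Set.toFinite _) (Set.toFinite _)).symm
              _ ≤ K.ncard := Set.ncard_le_ncard hunion (Set.toFinite K)
            rcases hcase with ⟨h1, h2⟩ | ⟨h1, h2⟩
            · omega
            · omega
        have hbigle : bigSize G (R \ L) ≤ K.ncard - ℓ * L.ncard := by
          refine bigSize_le_of ?_
          intro x hx hbigx
          have := hbigbound x hx hbigx
          omega
        have hℓL1 : 1 ≤ ℓ * L.ncard := by
          have := Nat.mul_le_mul hℓ hLne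
          omega
        have hR3 : ((S ∪ L) ∪ ⋃₀ (M : Set (Set V)))ᶜ = R \ L := by
          rw [hR]
          ext x
          simp only [Set.mem_compl_iff, Set.mem_diff, Set.mem_union]
          tauto
        have hdisjS3 : ∀ B ∈ M, Disjoint B (S ∪ L) := by
          intro B hB
          refine Set.disjoint_left.mpr ?_
          intro x hxB hxSL
          rcases hxSL with hxS | hxL
          · exact Set.disjoint_left.mp (hdisjS B hB) hxB hxS
          · exact (hMnotR B hB x hxB) (hLR hxL)
        have hmulSL : ℓ * (S ∪ L).ncard ≤ ℓ * S.ncard + ℓ * L.ncard := by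
          calc ℓ * (S ∪ L).ncard ≤ ℓ * (S.ncard + L.ncard) :=
            Nat.mul_le_mul_left _ (Set.ncard_union_le _ _)
          _ = ℓ * S.ncard + ℓ * L.ncard := by ring
        have hmul2 : (n + 2) * bigSize G (R \ L) ≤ (n + 2) * (K.ncard - 1) := by
          apply Nat.mul_le_mul_left
          omega
        have hface : (n + 2) * K.ncard = (n + 2) * (K.ncard - 1) + (n + 2) := by
          have h1 : K.ncard - 1 + 1 = K.ncard := Nat.sub_add_cancel hK1
          calc (n + 2) * K.ncard = (n + 2) * ((K.ncard - 1) + 1) := by rw [h1]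
          _ = (n + 2) * (K.ncard - 1) + (n + 2) := by ring
        refine IH ((n + 2) * (K.ncard - 1) + M.card) (by omega) (S ∪ L) M
          hdisjS3 hdisjM hPbM hsizeM hadjM ?_ ?_ hd1
        · rw [hR3]
          omega
        · rw [hR3]
          omega

def dfun (ℓ n : ℕ) : ℕ := 2 * ℓ * Nat.clog 2 (n + 1)

lemma induce_reach_RW {A : Set V} {x y : ↥A} (h : (G.induce A).Reachable x y) :
    RW G A x.1 y.1 := by
  obtain ⟨p⟩ := h
  obtain ⟨w, hw⟩ := induce_walk_to_RW p
  exact ⟨w, hw⟩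

lemma balanced_of_cmpt {C : Set V}
    (h : ∀ v ∈ Cᶜ, 3 * (cmpt G Cᶜ v).ncard ≤ 2 * Fintype.card V) :
    IsBalancedSeparator G C := by
  intro K
  obtain ⟨u, hu⟩ := K.exists_rep
  have hsupp : Subtype.val '' K.supp ⊆ cmpt G Cᶜ u.1 := by
    rintro x ⟨x', hx', rfl⟩
    have hmk : SimpleGraph.connectedComponentMk _ x' = K :=
      (SimpleGraph.ConnectedComponent.mem_supp_iff K x').mp hx'
    have hreach : (G.induce Cᶜ).Reachable x' u := by
      rw [← hu] at hmk
      exact (SimpleGraph.ConnectedComponent.eq).mp hmk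
    exact (induce_reach_RW hreach).symm
  have h1 : K.supp.ncard = (Subtype.val '' K.supp).ncard :=
    (Set.ncard_image_of_injective _ Subtype.val_injective).symm
  have h2 : (Subtype.val '' K.supp).ncard ≤ (cmpt G Cᶜ u.1).ncard :=
    Set.ncard_le_ncard hsupp (Set.toFinite _)
  have h3 := h u.1 u.2
  rw [Nat.card_eq_fintype_card]
  omega

lemma bigSize_le_card (X : Set V) : bigSize G X ≤ Fintype.card V :=
  bigSize_le_of (fun x _ _ => ncard_le_card _)

end PRS

/-- every `n`-vertex graph has a balanced separator of order at most
`n/ℓ + d(ℓ,n)·ω_{d(ℓ,n)}(G)²`. -/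
theorem stmt1 :
    ∃ (a : ℝ) (d : ℕ → ℕ → ℕ), 0 < a ∧
      (∀ ℓ ℓ' n n' : ℕ, ℓ ≤ ℓ' → n ≤ n' → d ℓ n ≤ d ℓ' n') ∧
      (∀ ℓ n : ℕ, 1 ≤ ℓ → 1 ≤ n → (d ℓ n : ℝ) ≤ a * ℓ * Real.logb 2 (n + 1)) ∧
      (∀ (V : Type) [Fintype V] (G : SimpleGraph V) (n ℓ : ℕ),
        Fintype.card V = n → 1 ≤ ℓ →
        ∃ C : Finset V, IsBalancedSeparator G ↑C ∧
          (C.card : ℝ) ≤ (n : ℝ) / ℓ +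
            (d ℓ n : ℝ) * (omegaDepth G (d ℓ n) : ℝ) ^ 2) := by
  classical
  refine ⟨4, PRS.dfun, by norm_num, ?_, ?_, ?_⟩
  · -- monotonicity
    intro ℓ ℓ' n n' hℓ hn
    exact Nat.mul_le_mul (Nat.mul_le_mul_left 2 hℓ) (Nat.clog_mono_right 2 (by omega))
  · -- growth bound
    intro ℓ n hℓ hn
    have hc1 : 1 ≤ Nat.clog 2 (n + 1) := Nat.clog_pos one_lt_two (by omega)
    have hlt : 2 ^ (Nat.clog 2 (n + 1) - 1) < n + 1 :=
      Nat.pow_pred_clog_lt_self one_lt_two (by omega)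
    have hcastpow : ((2:ℝ)) ^ (Nat.clog 2 (n + 1) - 1) ≤ ((n:ℝ) + 1) := by
      have : (2 ^ (Nat.clog 2 (n + 1) - 1) : ℕ) ≤ n + 1 := Nat.le_of_lt hlt
      exact_mod_cast this
    have hpos : (0:ℝ) < (n:ℝ) + 1 := by positivity
    have hlogb : ((Nat.clog 2 (n + 1) : ℝ) - 1) ≤ Real.logb 2 ((n:ℝ) + 1) := by
      have h1 : Real.logb 2 ((2:ℝ) ^ (Nat.clog 2 (n + 1) - 1))
          ≤ Real.logb 2 ((n:ℝ) + 1) :=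
        Real.logb_le_logb_of_le (by norm_num) (by positivity) hcastpow
      rw [Real.logb_pow, Real.logb_self_eq_one (by norm_num)] at h1
      have h2 : ((Nat.clog 2 (n + 1) - 1 : ℕ) : ℝ)
          = (Nat.clog 2 (n + 1) : ℝ) - 1 := by
        push_cast [Nat.cast_sub hc1]
        ring
      rw [h2, mul_one] at h1
      exact h1
    have hlog1 : (1:ℝ) ≤ Real.logb 2 ((n:ℝ) + 1) := by
      have h2 : ((2:ℝ)) ≤ (n:ℝ) + 1 := by
        have : (1:ℝ) ≤ (n:ℝ) := by exact_mod_cast hn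
        linarith
      calc (1:ℝ) = Real.logb 2 2 := (Real.logb_self_eq_one (by norm_num)).symm
      _ ≤ Real.logb 2 ((n:ℝ) + 1) := Real.logb_le_logb_of_le (by norm_num) (by norm_num) h2
    have hc2 : (Nat.clog 2 (n + 1) : ℝ) ≤ 2 * Real.logb 2 ((n:ℝ) + 1) := by linarith
    have hl0 : (0:ℝ) ≤ 2 * (ℓ:ℝ) := by positivity
    have : (PRS.dfun ℓ n : ℝ) = 2 * (ℓ:ℝ) * (Nat.clog 2 (n + 1) : ℝ) := by
      rw [PRS.dfun]
      push_cast
      ring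
    rw [this]
    calc 2 * (ℓ:ℝ) * (Nat.clog 2 (n + 1) : ℝ)
        ≤ 2 * (ℓ:ℝ) * (2 * Real.logb 2 ((n:ℝ) + 1)) := by
          exact mul_le_mul_of_nonneg_left hc2 hl0
    _ = 4 * (ℓ:ℝ) * Real.logb 2 ((n:ℝ) + 1) := by ring
  · -- the separator statement
    intro V _inst G n ℓ hcard hℓ
    subst hcard
    by_cases hV : Fintype.card V = 0
    · haveI : IsEmpty V := Fintype.card_eq_zero_iff.mp hV
      refine ⟨(∅ : Finset V), ?_, ?_⟩
      · intro K
        have hKempty : K.supp = ∅ := Set.eq_empty_of_isEmpty K.supp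
        rw [hKempty, Set.ncard_empty]
        omega
      · simp only [Finset.card_empty, Nat.cast_zero]
        positivity
    · have hn1 : 1 ≤ Fintype.card V := by omega
      have hc1 : 1 ≤ Nat.clog 2 (Fintype.card V + 1) := Nat.clog_pos one_lt_two (by omega)
      have hd1 : 1 ≤ PRS.dfun ℓ (Fintype.card V) := by
        rw [PRS.dfun]
        have := Nat.mul_le_mul (Nat.mul_le_mul (le_refl 2) hℓ) hc1
        omega
      have hSinv : ℓ * (∅ : Set V).ncard
          + PRS.bigSize G (((∅ : Set V) ∪ ⋃₀ ((∅ : Finset (Set V)) : Set (Set V)))ᶜ)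
          ≤ Fintype.card V := by
        rw [Set.ncard_empty, Nat.mul_zero, Nat.zero_add]
        exact PRS.bigSize_le_card _
      obtain ⟨C, hcomp, hcardC⟩ := PRS.core (G := G) hℓ rfl
        ((Fintype.card V + 2)
          * PRS.bigSize G (((∅ : Set V) ∪ ⋃₀ ((∅ : Finset (Set V)) : Set (Set V)))ᶜ)
          + (∅ : Finset (Set V)).card)
        (∅ : Set V) (∅ : Finset (Set V))
        (fun B hB => absurd hB (Finset.notMem_empty B))
        (fun B hB => absurd hB (Finset.notMem_empty B))
        (fun B hB => absurd hB (Finset.notMem_empty B))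
        (fun B hB => absurd hB (Finset.notMem_empty B))
        (fun B hB => absurd hB (Finset.notMem_empty B))
        hSinv le_rfl hd1
      refine ⟨C.toFinset, ?_, ?_⟩
      · rw [Set.coe_toFinset]
        exact PRS.balanced_of_cmpt hcomp
      · rw [← Set.ncard_eq_toFinset_card']
        exact hcardC
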